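/- The quantities Ξ^{lm} = 1 − N^{lm}N^{ml} are conservation laws of the discrete Darboux system. Precisely, let l, m, p be distinct indices and N^{lm}, N^{ml}, N^{lp}, N^{pl}, N^{mp}, N^{pm} complex numbers with 1 − N^{lm}N^{ml} ≠ 0, 1 − N^{lp}N^{pl} ≠ 0 and 1 − N^{mp}N^{pm} ≠ 0. Define the shifted values by the discrete Darboux system: N^{lp}_m = (N^{lp} + N^{lm}N^{mp})/(1 − N^{lm}N^{ml}), N^{pl}_m = (N^{pl} + N^{pm}N^{ml})/(1 − N^{pm}N^{mp}), N^{lm}_p = (N^{lm} + N^{lp}N^{pm})/(1 − N^{lp}N^{pl}), N^{ml}_p = (N^{ml} + N^{mp}N^{pl})/(1 − N^{mp}N^{pm}). Then (1 − N^{lm}N^{ml})·(1 − N^{lp}_m N^{pl}_m) = (1 − N^{lp}N^{pl})·(1 − N^{lm}_p N^{ml}_p). -/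
import Mathlib


/-- Conservation law `Ξ^{lm}·Ξ^{lp}_m = Ξ^{lp}·Ξ^{lm}_p` with `Ξ^{lm} = 1 − N^{lm}N^{ml}`
for the discrete Darboux system, where the shifted values are defined by
`N^{lp}_m = (N^{lp} + N^{lm}N^{mp})/(1 − N^{lm}N^{ml})`,
`N^{pl}_m = (N^{pl} + N^{pm}N^{ml})/(1 − N^{pm}N^{mp})`,
`N^{lm}_p = (N^{lm} + N^{lp}N^{pm})/(1 − N^{lp}N^{pl})`,
`N^{ml}_p = (N^{ml} + N^{mp}N^{pl})/(1 − N^{mp}N^{pm})`. -/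
theorem darboux_conservation_law (Nlm Nml Nlp Npl Nmp Npm : ℂ)
    (h1 : 1 - Nlm * Nml ≠ 0) (h2 : 1 - Nlp * Npl ≠ 0) (h3 : 1 - Nmp * Npm ≠ 0) :
    (1 - Nlm * Nml) *
        (1 - ((Nlp + Nlm * Nmp) / (1 - Nlm * Nml)) *
              ((Npl + Npm * Nml) / (1 - Npm * Nmp)))
      = (1 - Nlp * Npl) *
          (1 - ((Nlm + Nlp * Npm) / (1 - Nlp * Npl)) *
                ((Nml + Nmp * Npl) / (1 - Nmp * Npm))) := by
  have h3' : (1:ℂ) - Npm * Nmp ≠ 0 := by rwa [mul_comm]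
  field_simp
  ring
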